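/- For every real x > 0 and every real c ≥ 0, one has (1 + e^{-x})(x + c) + 2e^{-x} − 2 ≥ 0. -/
import Mathlib


open Real

lemma aux_key (x : ℝ) (hx : 0 ≤ x) : 2 - x ≤ (2 + x) * Real.exp (-x) := by
  have hmono : MonotoneOn (fun y : ℝ => (2 + y) * Real.exp (-y) + y) (Set.Ici 0) := by
    apply monotoneOn_of_deriv_nonneg (convex_Ici 0)
    · fun_prop
    · fun_prop
    · intro y hy
      have hderiv : deriv (fun y : ℝ => (2 + y) * Real.exp (-y) + y) y
          = 1 - (1 + y) * Real.exp (-y) := by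
        have h1 : HasDerivAt (fun y : ℝ => (2 + y) * Real.exp (-y) + y)
            ((0 + 1) * Real.exp (-y) + (2 + y) * (Real.exp (-y) * (-1)) + 1) y := by
          exact (((hasDerivAt_const y (2:ℝ)).add (hasDerivAt_id y)).mul
            ((Real.hasDerivAt_exp (-y)).comp y ((hasDerivAt_id y).neg))).add (hasDerivAt_id y)
        rw [h1.deriv]; ring
      rw [hderiv]
      have hy' : 0 ≤ y := le_of_lt (by simpa using hy)
      have h2 : (1 + y) * Real.exp (-y) ≤ 1 := by
        have hE : 0 < Real.exp (-y) := Real.exp_pos _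
        calc (1 + y) * Real.exp (-y) ≤ Real.exp y * Real.exp (-y) := by
              nlinarith [Real.add_one_le_exp y]
          _ = 1 := by rw [← Real.exp_add]; simp
      linarith
  have h0 : (0 : ℝ) ∈ Set.Ici (0 : ℝ) := Set.self_mem_Ici
  have hx' : x ∈ Set.Ici (0 : ℝ) := hx
  have := hmono h0 hx' hx
  simp only [neg_zero, Real.exp_zero, mul_one, add_zero] at this
  linarith

/-- For every real `x > 0` and every real `c ≥ 0`,
`(1 + e^{-x})(x + c) + 2e^{-x} − 2 ≥ 0`. -/
theorem key_inequality (x c : ℝ) (hx : 0 < x) (hc : 0 ≤ c) :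
    0 ≤ (1 + Real.exp (-x)) * (x + c) + 2 * Real.exp (-x) - 2 := by
  have h1 := aux_key x hx.le
  have h2 := Real.exp_pos (-x)
  nlinarith [mul_nonneg hc h2.le, mul_pos hx h2, sq_nonneg x]
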